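/- For any positive integer n and any unit Euclidean norm vectors u_1, …, u_{2n} ∈ ℝ^n, we have max_{1 ≤ i ≠ j ≤ 2n} |⟨u_i,u_j⟩| ≥ 1/√(2(2n−1)). -/

import Mathlib

private lemma swap4 {α β γ δ : Type*} [Fintype α] [Fintype β] [Fintype γ] [Fintype δ]
    (F : α → β → γ → δ → ℝ) :
    ∑ i, ∑ j, ∑ k, ∑ l, F i j k l = ∑ k, ∑ l, ∑ i, ∑ j, F i j k l := by
  calc ∑ i, ∑ j, ∑ k, ∑ l, F i j k l
      = ∑ i, ∑ k, ∑ j, ∑ l, F i j k l :=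
        Finset.sum_congr rfl (fun i _ => Finset.sum_comm)
    _ = ∑ k, ∑ i, ∑ j, ∑ l, F i j k l := Finset.sum_comm
    _ = ∑ k, ∑ i, ∑ l, ∑ j, F i j k l :=
        Finset.sum_congr rfl (fun k _ =>
          Finset.sum_congr rfl (fun i _ => Finset.sum_comm))
    _ = ∑ k, ∑ l, ∑ i, ∑ j, F i j k l :=
        Finset.sum_congr rfl (fun k _ => Finset.sum_comm)

/-- For any `2n` unit vectors in `ℝⁿ`,
`max_{i ≠ j} |⟨uᵢ,uⱼ⟩| ≥ 1/√(2(2n-1))`. -/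
theorem exists_pair_inner_ge
    (n : ℕ) (hn : 0 < n) (u : Fin (2 * n) → (Fin n → ℝ))
    (hunit : ∀ i, ∑ k : Fin n, (u i k) ^ 2 = 1) :
    ∃ i j : Fin (2 * n), i ≠ j ∧
      1 / Real.sqrt (2 * (2 * (n : ℝ) - 1)) ≤ |∑ k : Fin n, u i k * u j k| := by
  by_contra hcon
  push_neg at hcon
  have hn1 : (1 : ℝ) ≤ (n : ℝ) := by exact_mod_cast hn
  have hx : (0 : ℝ) < 2 * (2 * (n : ℝ) - 1) := by linarith
  set f : Fin (2 * n) → Fin (2 * n) → ℝ := fun i j => (∑ k, u i k * u j k) ^ 2 with hf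
  have hdiag : ∀ i, f i i = 1 := by
    intro i
    have : (∑ k, u i k * u i k) = 1 := by
      rw [← hunit i]; exact Finset.sum_congr rfl (fun k _ => (sq (u i k)).symm)
    simp [hf, this]
  have hoff : ∀ i j, i ≠ j → f i j ≤ 1 / (2 * (2 * (n : ℝ) - 1)) := by
    intro i j hij
    have h1 := (hcon i j hij).le
    have hcsq : (1 / Real.sqrt (2 * (2 * (n : ℝ) - 1))) ^ 2
        = 1 / (2 * (2 * (n : ℝ) - 1)) := by
      rw [div_pow, one_pow, Real.sq_sqrt hx.le]
    calc f i j = |∑ k, u i k * u j k| ^ 2 := (sq_abs _).symm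
      _ ≤ (1 / Real.sqrt (2 * (2 * (n : ℝ) - 1))) ^ 2 := by
          apply pow_le_pow_left₀ (abs_nonneg _) h1 2
      _ = 1 / (2 * (2 * (n : ℝ) - 1)) := hcsq
  set S : ℝ := ∑ i, ∑ j, f i j with hSdef
  -- Lower bound: S ≥ 4n
  set M : Fin n → Fin n → ℝ := fun k l => ∑ i, u i k * u i l with hM
  have hS : S = ∑ k, ∑ l, (M k l) ^ 2 := by
    have e1 : S = ∑ i, ∑ j, ∑ k, ∑ l, (u i k * u j k) * (u i l * u j l) := by
      simp only [hSdef, hf, sq, Finset.sum_mul_sum]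
    have e2 : (∑ k, ∑ l, (M k l) ^ 2)
        = ∑ k, ∑ l, ∑ i, ∑ j, (u i k * u i l) * (u j k * u j l) := by
      simp only [hM, sq, Finset.sum_mul_sum]
    rw [e1, e2, swap4]
    refine Finset.sum_congr rfl fun k _ => Finset.sum_congr rfl fun l _ =>
      Finset.sum_congr rfl fun i _ => Finset.sum_congr rfl fun j _ => by ring
  have htr : ∑ k, M k k = 2 * (n : ℝ) := by
    rw [Finset.sum_comm]
    have : ∀ i, ∑ k, u i k * u i k = 1 := by
      intro i; rw [← hunit i]
      exact Finset.sum_congr rfl (fun k _ => (sq (u i k)).symm)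
    simp only [this, Finset.sum_const, Finset.card_univ, Fintype.card_fin, nsmul_eq_mul,
      mul_one]
    push_cast; ring
  have hCS : (∑ k, M k k) ^ 2 ≤ (n : ℝ) * ∑ k, (M k k) ^ 2 := by
    have := sq_sum_le_card_mul_sum_sq (s := (Finset.univ : Finset (Fin n)))
      (f := fun k => M k k)
    simpa using this
  have hdiagle : ∑ k, (M k k) ^ 2 ≤ ∑ k, ∑ l, (M k l) ^ 2 := by
    apply Finset.sum_le_sum
    intro k _
    exact Finset.single_le_sum (f := fun l => (M k l) ^ 2)
      (fun l _ => sq_nonneg _) (Finset.mem_univ k)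
  have hlow : 4 * (n : ℝ) ≤ S := by
    have h1 : (2 * (n : ℝ)) ^ 2 ≤ (n : ℝ) * S := by
      rw [hS]
      calc (2 * (n : ℝ)) ^ 2 = (∑ k, M k k) ^ 2 := by rw [htr]
        _ ≤ (n : ℝ) * ∑ k, (M k k) ^ 2 := hCS
        _ ≤ (n : ℝ) * ∑ k, ∑ l, (M k l) ^ 2 := by
            apply mul_le_mul_of_nonneg_left hdiagle (by positivity)
    nlinarith [h1]
  -- Upper bound: S ≤ 3n
  have hup : S ≤ 3 * (n : ℝ) := by
    have hrow : ∀ i : Fin (2 * n), ∑ j, f i j ≤ 1 + 1 / 2 := by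
      intro i
      rw [← Finset.add_sum_erase _ _ (Finset.mem_univ i), hdiag i]
      have hcard : ((Finset.univ : Finset (Fin (2 * n))).erase i).card = 2 * n - 1 := by
        simp [Finset.card_erase_of_mem]
      have hbound : ∑ j ∈ (Finset.univ.erase i), f i j
          ≤ ((2 * n - 1 : ℕ) : ℝ) * (1 / (2 * (2 * (n : ℝ) - 1))) := by
        have := Finset.sum_le_card_nsmul (Finset.univ.erase i) (fun j => f i j)
          (1 / (2 * (2 * (n : ℝ) - 1)))
          (fun j hj => hoff i j (fun h => (Finset.ne_of_mem_erase hj) h.symm))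
        rw [hcard] at this
        simpa [nsmul_eq_mul] using this
      have hcast : ((2 * n - 1 : ℕ) : ℝ) = 2 * (n : ℝ) - 1 := by
        have : 1 ≤ 2 * n := by omega
        push_cast [Nat.cast_sub this]; ring
      have : ((2 * n - 1 : ℕ) : ℝ) * (1 / (2 * (2 * (n : ℝ) - 1))) = 1 / 2 := by
        rw [hcast, mul_one_div, div_eq_div_iff (by linarith) (by norm_num)]; ring
      linarith [hbound]
    calc S ≤ ∑ _i : Fin (2 * n), (1 + 1 / 2 : ℝ) := Finset.sum_le_sum (fun i _ => hrow i)
      _ = 3 * (n : ℝ) := by simp; ring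
  linarith
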